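/- On every instance, the matching returned by the greedy mechanism M_AP equals the union of the agents' FCFS policies: M_AP assigns to each agent a_i exactly the task set B_i, where B_i consists of a_i's top b_i valued tasks among those remaining after removing B_1, …, B_{i−1}. -/

import Mathlib

open Classical

/-- An edge of the bipartite graph: a pair (agent, task). -/
abbrev Edge (n m : ℕ) := Fin n × Fin m

variable {n m : ℕ}

/-- Number of tasks assigned to agent `i` in the edge set `μ`. -/
def deg (μ : Finset (Edge n m)) (i : Fin n) : ℕ := (μ.filter (fun e => e.1 = i)).card

/-- `μ` is a b-matching over the edge set `E'`: it uses only edges of `E'`, each agent `i`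
receives at most `b i` tasks, and each task is matched to at most one agent. -/
def IsBMatching (b : Fin n → ℕ) (E' μ : Finset (Edge n m)) : Prop :=
  μ ⊆ E' ∧ (∀ i, deg μ i ≤ b i) ∧ ∀ j : Fin m, (μ.filter (fun e => e.2 = j)).card ≤ 1

/-- Weight of a matching: total value of matched tasks. -/
noncomputable def weight (q : Fin m → ℝ) (μ : Finset (Edge n m)) : ℝ := ∑ e ∈ μ, q e.2

/-- Utility of agent `i`: total value of the tasks matched to `i`. -/
noncomputable def util (q : Fin m → ℝ) (i : Fin n) (μ : Finset (Edge n m)) : ℝ :=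
  ∑ e ∈ μ.filter (fun e => e.1 = i), q e.2

/-- `μ` is a maximum vertex-weighted b-matching over the edge set `E'`. -/
def IsMaxMatching (b : Fin n → ℕ) (q : Fin m → ℝ) (E' μ : Finset (Edge n m)) : Prop :=
  IsBMatching b E' μ ∧ ∀ ν, IsBMatching b E' ν → weight q ν ≤ weight q μ

/-- The edges of `E` incident to agent `i`. -/
def agentEdges (E : Finset (Edge n m)) (i : Fin n) : Finset (Edge n m) :=
  E.filter (fun e => e.1 = i)

/-- The edge set obtained from `E` when agent `i` reports `S` instead of its true edges. -/
def deviate (E : Finset (Edge n m)) (i : Fin n) (S : Finset (Edge n m)) : Finset (Edge n m) :=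
  E.filter (fun e => e.1 ≠ i) ∪ S

/-- A valid report of agent `i`: a nonempty subset of its true incident edges. -/
def ValidReport (E : Finset (Edge n m)) (i : Fin n) (S : Finset (Edge n m)) : Prop :=
  S ⊆ agentEdges E i ∧ S.Nonempty
open Classical in
/-- The tasks sorted in non-increasing order of value (ties broken by index). -/
noncomputable def sortedTasks (m : ℕ) (q : Fin m → ℝ) : List (Fin m) :=
  List.insertionSort (fun j k => q k ≤ q j) (List.finRange m)

/-- The greedy mechanism `M_AP`: process tasks in non-increasing value order, assigning each
task to the highest-priority unsaturated agent connected to it, if any. -/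
noncomputable def MAP (b : Fin n → ℕ) (q : Fin m → ℝ) (E' : Finset (Edge n m)) :
    Finset (Edge n m) :=
  (sortedTasks m q).foldl (fun μ j =>
    match (List.finRange n).find? (fun i => decide ((i, j) ∈ E' ∧ deg μ i < b i)) with
    | some i => insert (i, j) μ
    | none => μ) ∅

/-- `p = [(i₁,j₁),…,(i_L,j_L)]` is an augmenting path from task `j = j₁` with respect to the
matching `μ` in the graph `E'`: the edges `(i_ℓ, j_ℓ)` are non-matching edges of `E'`, the
edges `(i_ℓ, j_{ℓ+1})` are matching edges, all interior agents are saturated and the final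
agent is unsaturated. -/
structure IsAugPathFrom (b : Fin n → ℕ) (E' μ : Finset (Edge n m)) (j : Fin m)
    (p : List (Edge n m)) : Prop where
  ne : p ≠ []
  starts : ∀ e ∈ p.head?, e.2 = j
  mem : ∀ e ∈ p, e ∈ E' ∧ e ∉ μ
  matched : ∀ k, (h : k + 1 < p.length) →
    ((p.get ⟨k, Nat.lt_of_succ_lt h⟩).1, (p.get ⟨k + 1, h⟩).2) ∈ μ
  satInterior : ∀ k, (h : k + 1 < p.length) →
    b (p.get ⟨k, Nat.lt_of_succ_lt h⟩).1 ≤ deg μ (p.get ⟨k, Nat.lt_of_succ_lt h⟩).1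
  unsatLast : ∀ e ∈ p.getLast?, deg μ e.1 < b e.1
  agentsNodup : (p.map Prod.fst).Nodup
  tasksNodup : (p.map Prod.snd).Nodup

/-- The matching edges of an augmenting path. -/
def pathMatched (p : List (Edge n m)) : List (Edge n m) :=
  (p.zip p.tail).map (fun ef => (ef.1.1, ef.2.2))

/-- Flip an augmenting path: remove its matching edges and add its non-matching edges. -/
def applyPath (μ : Finset (Edge n m)) (p : List (Edge n m)) : Finset (Edge n m) :=
  (μ \ (pathMatched p).toFinset) ∪ p.toFinset

/-- A numeric key realizing the lexicographic order (by vertex indices) on augmenting paths. -/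
def pathKey (n m : ℕ) (p : List (Edge n m)) : ℕ :=
  ((p.flatMap fun (e : Edge n m) => [e.1.val + 1, e.2.val + 1]) ++
    List.replicate (2 * n - 2 * p.length) 0).foldl (fun a d => a * (n + m + 2) + d) 0

/-- DFS explores agents in priority order and goes deep first: it returns the lexicographically
least augmenting path. -/
def dfsCost (n m : ℕ) (p : List (Edge n m)) : ℕ := pathKey n m p

/-- BFS returns a shortest augmenting path, exploring vertices in priority order: it returns
the lexicographically least augmenting path among those of minimum length. -/
def bfsCost (n m : ℕ) (p : List (Edge n m)) : ℕ :=
  p.length * (n + m + 2) ^ (2 * n + 2) + pathKey n m p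

/-- Select the cost-minimal augmenting path from task `j`, if an augmenting path exists. -/
noncomputable def selectPath (cost : List (Edge n m) → ℕ) (b : Fin n → ℕ)
    (E' μ : Finset (Edge n m)) (j : Fin m) : Option (List (Edge n m)) :=
  if h : ∃ p, IsAugPathFrom b E' μ j p ∧ ∀ p', IsAugPathFrom b E' μ j p' → cost p ≤ cost p'
  then some h.choose else none

/-- The augmenting-path algorithm: process tasks in non-increasing value order, at each step
flipping the augmenting path found by the (deterministic) search given by `cost`. -/
noncomputable def runAug (cost : List (Edge n m) → ℕ) (b : Fin n → ℕ) (q : Fin m → ℝ)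
    (E' : Finset (Edge n m)) : Finset (Edge n m) :=
  (sortedTasks m q).foldl (fun μ j =>
    match selectPath cost b E' μ j with
    | some p => applyPath μ p
    | none => μ) ∅

/-- The maximum vertex-weighted b-matching mechanism using breadth-first search. -/
noncomputable def MBFS (b : Fin n → ℕ) (q : Fin m → ℝ) (E' : Finset (Edge n m)) :
    Finset (Edge n m) := runAug (bfsCost n m) b q E'

/-- The maximum vertex-weighted b-matching mechanism using depth-first search. -/
noncomputable def MDFS (b : Fin n → ℕ) (q : Fin m → ℝ) (E' : Finset (Edge n m)) :
    Finset (Edge n m) := runAug (dfsCost n m) b q E'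
open Classical in
/-- The top `k` valued tasks (ties broken by index) among a set `c` of tasks. -/
noncomputable def topTasks (q : Fin m → ℝ) (c : Finset (Fin m)) (k : ℕ) : Finset (Fin m) :=
  ((List.insertionSort (fun j j' => q j' ≤ q j)
    ((List.finRange m).filter (fun j => decide (j ∈ c)))).take k).toFinset

/-- `remTasks b q E k` is the set `T⁽ᵏ⁾` of tasks remaining after the first `k` agents took
their FCFS shares: `T⁽⁰⁾ = T` and `T⁽ⁱ⁾ = T⁽ⁱ⁻¹⁾ \ Bᵢ`. -/
noncomputable def remTasks (b : Fin n → ℕ) (q : Fin m → ℝ) (E : Finset (Edge n m)) :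
    ℕ → Finset (Fin m)
  | 0 => Finset.univ
  | k + 1 =>
    if h : k < n then
      remTasks b q E k \
        topTasks q ((remTasks b q E k).filter (fun j => (⟨k, h⟩, j) ∈ E)) (b ⟨k, h⟩)
    else remTasks b q E k

/-- The First-Come-First-Served policy of agent `i`: report only the edges to its top `b i`
valued tasks among those remaining after the higher-priority agents' FCFS policies. -/
noncomputable def FCFSP (b : Fin n → ℕ) (q : Fin m → ℝ) (E : Finset (Edge n m)) (i : Fin n) :
    Finset (Edge n m) :=
  (topTasks q ((remTasks b q E i.val).filter (fun j => (i, j) ∈ E)) (b i)).image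
    (fun j => (i, j))

/-- The union of all agents' FCFS policies. -/
noncomputable def FCFSunion (b : Fin n → ℕ) (q : Fin m → ℝ) (E : Finset (Edge n m)) :
    Finset (Edge n m) :=
  Finset.univ.biUnion (FCFSP b q E)

/-! ### Auxiliary lemmas -/

section SortFilter

variable {α : Type*} (r : α → α → Prop) [DecidableRel r] [IsTotal α r] [IsTrans α r]

theorem filter_orderedInsert_aux (p : α → Bool) (a : α) :
    ∀ L : List α, L.Pairwise r →
      (List.orderedInsert r a L).filter p =
        if p a then List.orderedInsert r a (L.filter p) else L.filter p := by
  intro L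
  induction L with
  | nil =>
    intro _
    by_cases hpa : p a <;> simp [List.orderedInsert, List.filter, hpa]
  | cons b L ih =>
    intro hs
    have hsL : L.Pairwise r := hs.of_cons
    by_cases hab : r a b
    · rw [List.orderedInsert_cons_of_le _ _ hab]
      by_cases hpa : p a
      · by_cases hpb : p b
        · simp only [List.filter_cons, hpa, hpb, if_true, if_pos]
          rw [List.orderedInsert_cons_of_le _ _ hab]
        · simp only [List.filter_cons, hpa, hpb, if_true, if_pos, Bool.false_eq_true,
            if_false, if_neg]
          have hall : ∀ c ∈ L.filter p, r a c := by
            intro c hc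
            exact _root_.trans hab (List.rel_of_pairwise_cons hs (List.mem_of_mem_filter hc))
          cases hLf : L.filter p with
          | nil => simp [List.orderedInsert]
          | cons c t =>
            rw [List.orderedInsert_cons_of_le _ _ (hall c (by rw [hLf]; exact List.mem_cons_self))]
      · by_cases hpb : p b <;> simp [List.filter_cons, hpa, hpb]
    · have hstep : List.orderedInsert r a (b :: L) = b :: List.orderedInsert r a L := by
        simp [List.orderedInsert, hab]
      rw [hstep]
      by_cases hpa : p a
      · by_cases hpb : p b
        · simp only [List.filter_cons, hpb, hpa, if_true, if_pos]
          rw [ih hsL, if_pos hpa]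
          have hstep2 : List.orderedInsert r a (b :: L.filter p)
              = b :: List.orderedInsert r a (L.filter p) := by
            simp [List.orderedInsert, hab]
          rw [hstep2]
        · simp only [List.filter_cons, hpb, hpa, if_true, if_pos, Bool.false_eq_true, if_false,
            if_neg]
          rw [ih hsL, if_pos hpa]
      · by_cases hpb : p b
        · simp only [List.filter_cons, hpb, hpa, if_true, if_pos, Bool.false_eq_true, if_false,
            if_neg]
          rw [ih hsL, if_neg hpa]
        · simp only [List.filter_cons, hpb, hpa, Bool.false_eq_true, if_false, if_neg]
          rw [ih hsL, if_neg hpa]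

theorem filter_insertionSort_comm (p : α → Bool) (l : List α) :
    (List.insertionSort r l).filter p = List.insertionSort r (l.filter p) := by
  induction l with
  | nil => rfl
  | cons a l ih =>
    show (List.orderedInsert r a (List.insertionSort r l)).filter p = _
    rw [filter_orderedInsert_aux r p a _ (List.pairwise_insertionSort r l), ih]
    by_cases hpa : p a
    · rw [if_pos hpa]
      simp only [List.filter_cons, hpa, if_true, if_pos]
      rfl
    · rw [if_neg hpa]
      simp only [List.filter_cons, hpa, Bool.false_eq_true, if_false, if_neg]

end SortFilter

theorem getElem_not_mem_take {α : Type*} {l : List α} (hl : l.Nodup) {t : ℕ}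
    (ht : t < l.length) : l[t] ∉ l.take t := by
  intro hmem
  have h2 : l[t] ∈ l.drop t := by
    rw [List.drop_eq_getElem_cons ht]; exact List.mem_cons_self
  have hl' : (l.take t ++ l.drop t).Nodup := by rw [List.take_append_drop]; exact hl
  exact List.disjoint_of_nodup_append hl' hmem h2

theorem take_filter_key {α : Type*} [DecidableEq α] {l : List α} (hl : l.Nodup) (p : α → Bool)
    {t k : ℕ} (ht : t < l.length) (hpj : p l[t] = true)
    (hj : l[t] ∉ ((l.filter p).take k).toFinset) :
    ((l.filter p).take k).toFinset.card = k ∧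
      ((l.filter p).take k).toFinset ⊆ (l.take t).toFinset := by
  set a := (l.take t).filter p with ha
  have hdecomp : l.filter p = a ++ l[t] :: (l.drop (t + 1)).filter p := by
    conv_lhs => rw [← List.take_append_drop t l]
    rw [List.filter_append, List.drop_eq_getElem_cons ht, List.filter_cons, if_pos hpj]
  have hk : k ≤ a.length := by
    by_contra h
    push_neg at h
    apply hj
    rw [List.mem_toFinset, hdecomp, List.take_append]
    apply List.mem_append_right
    have hd : k - a.length = (k - a.length - 1) + 1 := by omega
    rw [hd, List.take_succ_cons]
    exact List.mem_cons_self
  have htake : (l.filter p).take k = a.take k := by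
    rw [hdecomp, List.take_append, Nat.sub_eq_zero_of_le hk, List.take_zero,
      List.append_nil]
  have hsub : List.Sublist (a.take k) (l.take t) :=
    (List.take_sublist k a).trans List.filter_sublist
  have hnd : (a.take k).Nodup := (hsub.trans (List.take_sublist t l)).nodup hl
  constructor
  · rw [htake, List.toFinset_card_of_nodup hnd, List.length_take, Nat.min_eq_left hk]
  · intro x hx
    rw [htake, List.mem_toFinset] at hx
    rw [List.mem_toFinset]
    exact hsub.subset hx

theorem find?_eq_some_of_sorted {n : ℕ} (p : Fin n → Bool) (k : Fin n) (hk : p k = true)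
    (hlt : ∀ i, i < k → p i = false) :
    ∀ l : List (Fin n), l.Pairwise (· < ·) → k ∈ l → l.find? p = some k := by
  intro l
  induction l with
  | nil => simp
  | cons a l ih =>
    intro hs hmem
    rcases List.mem_cons.mp hmem with rfl | hmem'
    · exact List.find?_cons_of_pos hk
    · have ha : a < k := List.rel_of_pairwise_cons hs hmem'
      rw [List.find?_cons_of_neg (by simp [hlt a ha])]
      exact ih hs.of_cons hmem'

/-- The step function of `MAP`. -/
def stepMAP (b : Fin n → ℕ) (E : Finset (Edge n m)) (μ : Finset (Edge n m)) (j : Fin m) :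
    Finset (Edge n m) :=
  match (List.finRange n).find? (fun i => decide ((i, j) ∈ E ∧ deg μ i < b i)) with
  | some i => insert (i, j) μ
  | none => μ

theorem MAP_eq_foldl (b : Fin n → ℕ) (q : Fin m → ℝ) (E : Finset (Edge n m)) :
    MAP b q E = (sortedTasks m q).foldl (stepMAP b E) ∅ := rfl

theorem stepMAP_some {b : Fin n → ℕ} {E : Finset (Edge n m)} {μ : Finset (Edge n m)} {j : Fin m}
    {k : Fin n}
    (h : (List.finRange n).find? (fun i => decide ((i, j) ∈ E ∧ deg μ i < b i)) = some k) :
    stepMAP b E μ j = insert (k, j) μ := by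
  unfold stepMAP; rw [h]

theorem stepMAP_none {b : Fin n → ℕ} {E : Finset (Edge n m)} {μ : Finset (Edge n m)} {j : Fin m}
    (h : (List.finRange n).find? (fun i => decide ((i, j) ∈ E ∧ deg μ i < b i)) = none) :
    stepMAP b E μ j = μ := by
  unfold stepMAP; rw [h]

/-- The FCFS task set `Bᵢ` of agent `i`. -/
noncomputable def Bset (b : Fin n → ℕ) (q : Fin m → ℝ) (E : Finset (Edge n m)) (i : Fin n) :
    Finset (Fin m) :=
  topTasks q ((remTasks b q E i.val).filter (fun j => (i, j) ∈ E)) (b i)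

theorem FCFSP_eq_image (b : Fin n → ℕ) (q : Fin m → ℝ) (E : Finset (Edge n m)) (i : Fin n) :
    FCFSP b q E i = (Bset b q E i).image (fun j => (i, j)) := rfl

theorem remTasks_succ (b : Fin n → ℕ) (q : Fin m → ℝ) (E : Finset (Edge n m)) {k : ℕ}
    (h : k < n) :
    remTasks b q E (k + 1) = remTasks b q E k \ Bset b q E ⟨k, h⟩ := by
  rw [remTasks, dif_pos h]; rfl

theorem remTasks_anti (b : Fin n → ℕ) (q : Fin m → ℝ) (E : Finset (Edge n m)) :
    ∀ u v : ℕ, u ≤ v → remTasks b q E v ⊆ remTasks b q E u := by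
  intro u v
  induction v with
  | zero => intro h; rw [Nat.le_zero.mp h]
  | succ w ih =>
    intro h
    rcases Nat.lt_or_ge u (w + 1) with h' | h'
    · refine Finset.Subset.trans ?_ (ih (Nat.lt_succ_iff.mp h'))
      rw [remTasks]
      split
      · exact Finset.sdiff_subset
      · exact Finset.Subset.refl _
    · have : u = w + 1 := le_antisymm h h'
      rw [this]

section TaskSort

variable (q : Fin m → ℝ)

theorem qr_total : IsTotal (Fin m) (fun j k => q k ≤ q j) :=
  ⟨fun a b => (le_total (q b) (q a)).imp id id⟩

theorem qr_trans : IsTrans (Fin m) (fun j k => q k ≤ q j) :=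
  ⟨fun _ _ _ hab hbc => le_trans hbc hab⟩

theorem sortedTasks_nodup : (sortedTasks m q).Nodup :=
  ((List.perm_insertionSort _ _).nodup_iff).mpr (List.nodup_finRange m)

theorem sortedTasks_mem (j : Fin m) : j ∈ sortedTasks m q :=
  ((List.perm_insertionSort _ _).mem_iff).mpr (List.mem_finRange j)

theorem topTasks_eq (c : Finset (Fin m)) (k : ℕ) :
    topTasks q c k = (((sortedTasks m q).filter (fun j => decide (j ∈ c))).take k).toFinset := by
  haveI := qr_total q; haveI := qr_trans q
  unfold topTasks sortedTasks
  rw [filter_insertionSort_comm]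

theorem topTasks_subset (c : Finset (Fin m)) (k : ℕ) : topTasks q c k ⊆ c := by
  intro j hj
  unfold topTasks at hj
  rw [List.mem_toFinset] at hj
  have h1 := List.mem_of_mem_take hj
  have h2 := ((List.perm_insertionSort _ _).mem_iff).mp h1
  exact of_decide_eq_true (List.mem_filter.mp h2).2

end TaskSort

section BsetFacts

variable (b : Fin n → ℕ) (q : Fin m → ℝ) (E : Finset (Edge n m))

theorem Bset_subset (i : Fin n) :
    Bset b q E i ⊆ (remTasks b q E i.val).filter (fun j => (i, j) ∈ E) :=
  topTasks_subset q _ _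

theorem Bset_card_le (i : Fin n) : (Bset b q E i).card ≤ b i := by
  unfold Bset topTasks
  exact le_trans (List.toFinset_card_le _) (List.length_take_le _ _)

theorem Bset_full (i : Fin n) {j : Fin m} {t : ℕ} (ht : t < (sortedTasks m q).length)
    (hjt : (sortedTasks m q)[t] = j)
    (hjr : j ∈ remTasks b q E i.val) (hjE : (i, j) ∈ E) (hjB : j ∉ Bset b q E i) :
    (Bset b q E i).card = b i ∧ Bset b q E i ⊆ ((sortedTasks m q).take t).toFinset := by
  classical
  subst hjt
  set c := (remTasks b q E i.val).filter (fun j => (i, j) ∈ E) with hc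
  have hjc : (sortedTasks m q)[t] ∈ c := Finset.mem_filter.mpr ⟨hjr, hjE⟩
  have hBeq : Bset b q E i
      = (((sortedTasks m q).filter (fun j => decide (j ∈ c))).take (b i)).toFinset :=
    topTasks_eq q c (b i)
  have hpj : (fun j => decide (j ∈ c)) (sortedTasks m q)[t] = true := decide_eq_true hjc
  have hnotin : (sortedTasks m q)[t]
      ∉ (((sortedTasks m q).filter (fun j => decide (j ∈ c))).take (b i)).toFinset := by
    rw [← hBeq]; exact hjB
  obtain ⟨h1, h2⟩ := take_filter_key (sortedTasks_nodup q) (fun j => decide (j ∈ c)) ht hpj hnotin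
  rw [hBeq]
  exact ⟨h1, h2⟩

theorem Bset_disj : ∀ {i k : Fin n} {j : Fin m},
    j ∈ Bset b q E i → j ∈ Bset b q E k → i = k := by
  have key : ∀ (i k : Fin n) (j : Fin m), i < k → j ∈ Bset b q E k → j ∉ Bset b q E i := by
    intro i k j hik hjk
    have h1 : j ∈ remTasks b q E k.val := (Finset.mem_filter.mp (Bset_subset b q E k hjk)).1
    have h2 : j ∈ remTasks b q E (i.val + 1) := remTasks_anti b q E (i.val + 1) k.val hik h1
    rw [remTasks_succ b q E i.isLt] at h2
    have h3 := (Finset.mem_sdiff.mp h2).2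
    simpa using h3
  intro i k j hi hk
  rcases lt_trichotomy i k with h | h | h
  · exact absurd hi (key i k j h hk)
  · exact h
  · exact absurd hk (key k i j h hi)

theorem mem_remTasks_of_forall {j : Fin m} :
    ∀ v : ℕ, v ≤ n → (∀ i : Fin n, i.val < v → j ∉ Bset b q E i) → j ∈ remTasks b q E v := by
  intro v
  induction v with
  | zero => intro _ _; exact Finset.mem_univ j
  | succ w ih =>
    intro hv hB
    have hw : w < n := Nat.lt_of_succ_le hv
    rw [remTasks_succ b q E hw]
    exact Finset.mem_sdiff.mpr ⟨ih (le_of_lt hw) (fun i hi => hB i (Nat.lt_succ_of_lt hi)),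
      hB ⟨w, hw⟩ (Nat.lt_succ_self w)⟩

end BsetFacts

/-- On every instance, the matching returned by the greedy mechanism
`M_AP` equals the union of the agents' FCFS policies; in particular each agent `i` is
assigned exactly its FCFS task set `Bᵢ`. -/
theorem MAP_equals_FCFS_union (n m : ℕ) (b : Fin n → ℕ) (q : Fin m → ℝ)
    (hq : ∀ j, 0 < q j) (E : Finset (Edge n m)) :
    MAP b q E = FCFSunion b q E ∧
    ∀ i, (MAP b q E).filter (fun e => e.1 = i) = FCFSP b q E i := by
  classical
  set s := sortedTasks m q with hs
  have hsnd : s.Nodup := sortedTasks_nodup q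
  have hsmem : ∀ j : Fin m, j ∈ s := sortedTasks_mem q
  set F := FCFSunion b q E with hF
  have hFmem : ∀ e : Edge n m, e ∈ F ↔ e.2 ∈ Bset b q E e.1 := by
    intro e
    simp only [hF, FCFSunion, Finset.mem_biUnion, Finset.mem_univ, true_and,
      FCFSP_eq_image, Finset.mem_image]
    constructor
    · rintro ⟨i, j', hj', rfl⟩
      exact hj'
    · intro h
      exact ⟨e.1, e.2, h, rfl⟩
  have hdeg : ∀ (pre : Finset (Fin m)) (i : Fin n),
      deg (F.filter (fun e => e.2 ∈ pre)) i = (Bset b q E i ∩ pre).card := by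
    intro pre i
    have himg : (F.filter (fun e => e.2 ∈ pre)).filter (fun e => e.1 = i)
        = (Bset b q E i ∩ pre).image (fun j => (i, j)) := by
      ext e
      simp only [Finset.mem_filter, Finset.mem_image, Finset.mem_inter]
      constructor
      · rintro ⟨⟨heF, hpre⟩, hi⟩
        refine ⟨e.2, ⟨?_, hpre⟩, ?_⟩
        · rw [← hi]; exact (hFmem e).mp heF
        · rw [← hi]
      · rintro ⟨j', ⟨hjB, hjp⟩, rfl⟩
        exact ⟨⟨(hFmem _).mpr hjB, hjp⟩, rfl⟩
    rw [deg, himg, Finset.card_image_of_injective _ (fun a b h => by simpa using h)]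
  have key : ∀ t, t ≤ s.length →
      (s.take t).foldl (stepMAP b E) ∅ = F.filter (fun e => e.2 ∈ (s.take t).toFinset) := by
    intro t
    induction t with
    | zero => intro _; simp
    | succ t ih =>
      intro ht1
      have ht : t < s.length := lt_of_lt_of_le (Nat.lt_succ_self t) ht1
      set j := s[t] with hj
      have htake : s.take (t + 1) = s.take t ++ [j] := by
        rw [List.take_succ, List.getElem?_eq_getElem ht]
        rfl
      rw [htake, List.foldl_append, ih (le_of_lt ht)]
      set pre := (s.take t).toFinset with hpre
      set μ := F.filter (fun e => e.2 ∈ pre) with hμ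
      have hfin : (s.take t ++ [j]).toFinset = insert j pre := by
        rw [hpre]
        ext x; simp [or_comm]
      rw [hfin]
      simp only [List.foldl_cons, List.foldl_nil]
      have hjpre : j ∉ pre := by
        rw [hpre, List.mem_toFinset, hj]
        exact getElem_not_mem_take hsnd ht
      by_cases hex : ∃ k : Fin n, j ∈ Bset b q E k
      · obtain ⟨k, hk⟩ := hex
        have hkE : (k, j) ∈ E := (Finset.mem_filter.mp (Bset_subset b q E k hk)).2
        have hpk : decide ((k, j) ∈ E ∧ deg μ k < b k) = true := by
          apply decide_eq_true
          refine ⟨hkE, ?_⟩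
          rw [hμ, hdeg]
          calc (Bset b q E k ∩ pre).card
              < (Bset b q E k).card :=
                Finset.card_lt_card ⟨Finset.inter_subset_left, fun hsub =>
                  hjpre (Finset.mem_inter.mp (hsub hk)).2⟩
            _ ≤ b k := Bset_card_le b q E k
        have hplt : ∀ i, i < k → decide ((i, j) ∈ E ∧ deg μ i < b i) = false := by
          intro i hik
          apply decide_eq_false
          rintro ⟨hiE, hdlt⟩
          have hjrem : j ∈ remTasks b q E i.val :=
            remTasks_anti b q E i.val k.val (le_of_lt hik)
              (Finset.mem_filter.mp (Bset_subset b q E k hk)).1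
          have hjBi : j ∉ Bset b q E i := fun h => (ne_of_lt hik) (Bset_disj b q E h hk)
          obtain ⟨hcard, hsub⟩ := Bset_full b q E i ht hj.symm hjrem hiE hjBi
          have hinter : Bset b q E i ∩ pre = Bset b q E i := Finset.inter_eq_left.mpr hsub
          rw [hμ, hdeg, hinter, hcard] at hdlt
          exact lt_irrefl _ hdlt
        rw [stepMAP_some (find?_eq_some_of_sorted _ k hpk hplt (List.finRange n)
          (List.pairwise_lt_finRange n) (List.mem_finRange k))]
        ext e
        obtain ⟨e1, e2⟩ := e
        simp only [hμ, Finset.mem_insert, Finset.mem_filter, Prod.mk.injEq]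
        constructor
        · rintro (⟨h1, h2⟩ | ⟨h1, h2⟩)
          · exact ⟨by rw [h1, h2]; exact (hFmem (k, j)).mpr hk, Or.inl h2⟩
          · exact ⟨h1, Or.inr h2⟩
        · rintro ⟨h1, h2 | h2⟩
          · have hB : e2 ∈ Bset b q E e1 := (hFmem (e1, e2)).mp h1
            rw [h2] at hB
            exact Or.inl ⟨Bset_disj b q E hB hk, h2⟩
          · exact Or.inr ⟨h1, h2⟩
      · have hall : ∀ i : Fin n, j ∉ Bset b q E i := fun i hi => hex ⟨i, hi⟩
        have hfind : (List.finRange n).find?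
            (fun i => decide ((i, j) ∈ E ∧ deg μ i < b i)) = none := by
          rw [List.find?_eq_none]
          intro i _
          simp only [decide_eq_true_eq]
          rintro ⟨hiE, hdlt⟩
          have hjrem : j ∈ remTasks b q E i.val :=
            mem_remTasks_of_forall b q E i.val (le_of_lt i.isLt) (fun k _ => hall k)
          obtain ⟨hcard, hsub⟩ := Bset_full b q E i ht hj.symm hjrem hiE (hall i)
          have hinter : Bset b q E i ∩ pre = Bset b q E i := Finset.inter_eq_left.mpr hsub
          rw [hμ, hdeg, hinter, hcard] at hdlt
          exact lt_irrefl _ hdlt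
        rw [stepMAP_none hfind]
        ext e
        simp only [hμ, Finset.mem_filter, Finset.mem_insert]
        constructor
        · rintro ⟨h1, h2⟩
          exact ⟨h1, Or.inr h2⟩
        · rintro ⟨h1, h2 | h2⟩
          · have hB : e.2 ∈ Bset b q E e.1 := (hFmem e).mp h1
            rw [h2] at hB
            exact absurd hB (hall e.1)
          · exact ⟨h1, h2⟩
  have hMAPeq : MAP b q E = F := by
    have hkey := key s.length (le_refl _)
    rw [List.take_length] at hkey
    rw [MAP_eq_foldl, ← hs, hkey]
    apply Finset.filter_true_of_mem
    intro e _
    rw [List.mem_toFinset]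
    exact hsmem e.2
  refine ⟨hMAPeq, ?_⟩
  intro i
  rw [hMAPeq, FCFSP_eq_image]
  ext e
  simp only [Finset.mem_filter, Finset.mem_image]
  constructor
  · rintro ⟨h1, h2⟩
    exact ⟨e.2, by rw [← h2]; exact (hFmem e).mp h1, by rw [← h2]⟩
  · rintro ⟨j', hj', rfl⟩
    exact ⟨(hFmem (i, j')).mpr hj', rfl⟩
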